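/- Let n ≥ 2 and 0 ≤ k ≤ n−2 be integers. In the ring of formal power series ℤ⟦u⟧, the coefficient of u^k in the series (1−u)^{n−1} · ((1+u)^{n−k−1})⁻¹ equals Σ_{i=0}^{k} (−2)^i · binom(n−1, i). -/

import Mathlib

open PowerSeries

lemma coeff_one_add_X_pow_ps (m d : ℕ) :
    coeff d ((1 + X) ^ m) = (m.choose d : ℤ) := by
  have : ((1 + X : ℤ⟦X⟧)) ^ m = (((1 + Polynomial.X : Polynomial ℤ) ^ m : Polynomial ℤ) : ℤ⟦X⟧) := by
    push_cast
    simp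
  rw [this, Polynomial.coeff_coe, Polynomial.coeff_one_add_X_pow]

/-- Let `n ≥ 2` and `0 ≤ k ≤ n−2`. In `ℤ⟦u⟧`, the coefficient of `u^k`
in `(1−u)^{n−1} · ((1+u)^{n−k−1})⁻¹` equals `Σ_{i=0}^{k} (−2)^i · C(n−1, i)`.
(The inverse is witnessed by a power series `f` with `f · (1+u)^{n−k−1} = 1`.) -/
theorem coeff_pow_mul_inv (n k : ℕ) (hn : 2 ≤ n) (hk : k ≤ n - 2)
    (f : PowerSeries ℤ) (hf : f * (1 + X) ^ (n - k - 1) = 1) :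
    coeff k ((1 - X) ^ (n - 1) * f) =
      ∑ i ∈ Finset.range (k + 1), (-2) ^ i * ((n - 1).choose i : ℤ) := by
  have expand : (1 - X : ℤ⟦X⟧) ^ (n - 1) =
      ∑ j ∈ Finset.range (n - 1 + 1),
        (-(2 * X)) ^ j * (1 + X) ^ (n - 1 - j) * ((n - 1).choose j : ℤ⟦X⟧) := by
    rw [show (1 - X : ℤ⟦X⟧) = (-(2 * X)) + (1 + X) by ring]
    exact add_pow _ _ _
  rw [expand, Finset.sum_mul, map_sum]
  rw [← Finset.sum_subset (Finset.range_subset_range.mpr (by omega : k + 1 ≤ n - 1 + 1))]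
  · apply Finset.sum_congr rfl
    intro j hj
    have hjk : j ≤ k := Nat.lt_succ_iff.mp (Finset.mem_range.mp hj)
    have hsplit : n - 1 - j = (n - k - 1) + (k - j) := by omega
    have hterm : (-(2 * X) : ℤ⟦X⟧) ^ j * (1 + X) ^ (n - 1 - j) * ((n - 1).choose j : ℤ⟦X⟧) * f
        = (C ((-2) ^ j * ((n - 1).choose j : ℤ))) * (X ^ j * (1 + X) ^ (k - j)) := by
      rw [hsplit, pow_add]
      have : (f * (1 + X) ^ (n - k - 1)) * ((-(2 * X)) ^ j * (1 + X) ^ (k - j)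
          * ((n - 1).choose j : ℤ⟦X⟧))
          = (-(2 * X) : ℤ⟦X⟧) ^ j * ((1 + X) ^ (n - k - 1) * (1 + X) ^ (k - j))
            * ((n - 1).choose j : ℤ⟦X⟧) * f := by ring
      rw [← this, hf, one_mul, map_mul, map_pow]
      simp only [map_neg, map_ofNat, map_natCast]
      ring
    rw [hterm, coeff_C_mul, coeff_X_pow_mul' _ _ _]
    rw [if_pos hjk, coeff_one_add_X_pow_ps, Nat.choose_self]
    push_cast
    ring
  · intro j hj hjk
    have hjk' : k < j := by
      simp only [Finset.mem_range] at hjk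
      omega
    have : (-(2 * X) : ℤ⟦X⟧) ^ j * (1 + X) ^ (n - 1 - j) * ((n - 1).choose j : ℤ⟦X⟧) * f
        = X ^ j * ((-2) ^ j * (1 + X) ^ (n - 1 - j) * ((n - 1).choose j : ℤ⟦X⟧) * f) := by
      ring
    rw [this, coeff_X_pow_mul', if_neg (by omega)]
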